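/- arXiv:1506.05551 — 5 statements merged into one kernel-verified Lean document; each statement's English description precedes it below -/
import Mathlib

section
/- Let (S, F, μ) be a probability space and X₁,…,Xₙ : S → ℝ be μ-integrable functions. Then the vector (∫ X₁ dμ, …, ∫ Xₙ dμ) ∈ ℝⁿ lies in the convex hull of the set X(S) = {(X₁(t),…,Xₙ(t)) : t ∈ S}. -/
open MeasureTheory Set FiniteDimensional


theorem exists_supporting_functional {E : Type*} [NormedAddCommGroup E] [NormedSpace ℝ E]
    [FiniteDimensional ℝ E] {C : Set E} (hC : Convex ℝ C) {b : E}
    (hb : b ∈ closure C) (hbC : b ∉ C) :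
    ∃ g : E →L[ℝ] ℝ, (∀ x ∈ C, g x ≤ g b) ∧ ∃ x ∈ C, g x < g b := by
  classical
  set D : Set E := (fun x => -b + x) '' C with hDdef
  have hDc : Convex ℝ D := hC.translate (-b)
  have h0cl : (0 : E) ∈ closure D := by
    have h1 := (Homeomorph.addLeft (-b)).image_closure C
    have h2 : (0 : E) ∈ ⇑(Homeomorph.addLeft (-b)) '' closure C := ⟨b, hb, by simp⟩
    rw [h1] at h2
    exact h2
  have h0D : (0 : E) ∉ D := by
    rintro ⟨x, hx, hx0⟩
    have : x = b := by linear_combination (norm := module) hx0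
    exact hbC (this ▸ hx)
  have h0span : (0 : E) ∈ affineSpan ℝ D := by
    have hcl : IsClosed ((affineSpan ℝ D : Set E)) :=
      (affineSpan ℝ D).closed_of_finiteDimensional
    exact hcl.closure_subset (closure_mono (subset_affineSpan ℝ D) h0cl)
  set W : Submodule ℝ E := (affineSpan ℝ D).direction with hWdef
  have hWD : (W : Set E) = (affineSpan ℝ D : Set E) := by
    rw [hWdef, AffineSubspace.coe_direction_eq_vsub_set_right h0span]
    ext x; simp
  have hDW : D ⊆ (W : Set E) := hWD ▸ subset_affineSpan ℝ D
  set D' : Set W := (W.subtype) ⁻¹' D with hD'def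
  have hD'c : Convex ℝ D' := hDc.linear_preimage W.subtype
  have hDimg : (W.subtype) '' D' = D := by
    apply Set.image_preimage_eq_of_subset
    intro x hx; exact ⟨⟨x, hDW hx⟩, rfl⟩
  have hspan' : affineSpan ℝ D' = ⊤ := by
    rw [eq_top_iff]
    intro w _
    have hw : (w : E) ∈ affineSpan ℝ D := by
      rw [← AffineSubspace.mem_coe, ← hWD]; exact w.2
    have hmem : (w : E) ∈ (affineSpan ℝ D').map (W.subtype.toAffineMap) := by
      rw [AffineSubspace.map_span]
      have him : ⇑W.subtype.toAffineMap '' D' = D := by simpa using hDimg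
      rw [him]; exact hw
    rcases hmem with ⟨w', hw', hww'⟩
    have : w' = w := Subtype.ext hww'
    exact this ▸ hw'
  have hint : (interior D').Nonempty := by
    rw [hD'c.interior_nonempty_iff_affineSpan_eq_top]
    exact hspan'
  obtain ⟨z, hz⟩ := hint
  have h0D' : (0 : W) ∉ interior D' := fun h => h0D (by have h' : (0 : W) ∈ D' := interior_subset h; have h'' : W.subtype 0 ∈ D := h'; rwa [map_zero] at h'')
  obtain ⟨L, hL⟩ := geometric_hahn_banach_open_point (hD'c.interior) isOpen_interior h0D'
  have hL0 : L (0 : W) = 0 := map_zero L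
  have hle : ∀ x ∈ D', L x ≤ 0 := by
    intro x hx
    by_contra h
    push_neg at h
    have hc : L z < 0 := hL0 ▸ hL z hz
    set t : ℝ := L x / (L x - L z) with ht
    have hd : 0 < L x - L z := by linarith
    have ht0 : 0 < t := div_pos h hd
    have ht1 : t ≤ 1 := by rw [div_le_one hd]; linarith
    have hmem : t • z + (1 - t) • x ∈ interior D' :=
      hD'c.combo_interior_closure_mem_interior hz (subset_closure hx) ht0 (by linarith) (by ring)
    have hv : L (t • z + (1 - t) • x) < 0 := by
      have h5 := hL _ hmem; rwa [hL0] at h5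
    have hv' : t * L z + (1 - t) * L x < 0 := by
      rw [map_add, _root_.map_smul, _root_.map_smul, smul_eq_mul, smul_eq_mul] at hv; exact hv
    have htv : t * (L x - L z) = L x := by rw [ht]; field_simp
    nlinarith
  have hlt : L z < 0 := hL0 ▸ hL z hz
  obtain ⟨g, hg, -⟩ := exists_extension_norm_eq W L
  refine ⟨g, ?_, ?_⟩
  · intro x hx
    have hxD : -b + x ∈ D := ⟨x, hx, rfl⟩
    have h1 := hle ⟨-b + x, hDW hxD⟩ hxD
    rw [← hg ⟨-b + x, hDW hxD⟩] at h1
    have h2 : g (-b + x) ≤ 0 := h1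
    rw [map_add, map_neg] at h2
    linarith
  · have hzD : (z : E) ∈ D := by rw [← hDimg]; exact ⟨z, interior_subset hz, rfl⟩
    obtain ⟨x, hx, hxz⟩ := hzD
    refine ⟨x, hx, ?_⟩
    have hbz : -b + x = (z : E) := hxz
    have h1 : g (-b + x) = L z := by rw [hbz]; exact hg z
    rw [map_add, map_neg] at h1
    linarith


theorem integral_mem_convexHull_image {E : Type*} [NormedAddCommGroup E] [NormedSpace ℝ E]
    [FiniteDimensional ℝ E] :
    ∀ (d : ℕ) {S : Type*} [MeasurableSpace S] (μ : Measure S) [IsProbabilityMeasure μ]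
      (f : S → E) (A : Set S), Integrable f μ → (∀ᵐ t ∂μ, t ∈ A) →
      Module.finrank ℝ (vectorSpan ℝ (f '' A)) ≤ d →
      (∫ t, f t ∂μ) ∈ convexHull ℝ (f '' A) := by
  intro d
  induction d using Nat.strong_induction_on with
  | _ d IH =>
    intro S _ μ _ f A hf hA hd
    set C : Set E := convexHull ℝ (f '' A) with hCdef
    set b : E := ∫ t, f t ∂μ with hbdef
    have hCc : Convex ℝ C := convex_convexHull ℝ _
    have hbcl : b ∈ closure C := by
      apply hCc.closure.integral_mem isClosed_closure _ hf
      filter_upwards [hA] with t ht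
      exact subset_closure (subset_convexHull ℝ _ (mem_image_of_mem f ht))
    by_cases hbC : b ∈ C
    · exact hbC
    -- supporting functional
    obtain ⟨g, hg1, x₀, hx₀C, hx₀⟩ := exists_supporting_functional hCc hbcl hbC
    -- g ∘ f = g b a.e.
    have hgf_int : Integrable (fun t => g (f t)) μ := g.integrable_comp hf
    have hgf_eq : ∫ t, g (f t) ∂μ = g b := g.integral_comp_comm hf
    have hnonneg : 0 ≤ᵐ[μ] fun t => g b - g (f t) := by
      filter_upwards [hA] with t ht
      have : g (f t) ≤ g b := hg1 _ (subset_convexHull ℝ _ (mem_image_of_mem f ht))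
      simpa using this
    have hint0 : ∫ t, (g b - g (f t)) ∂μ = 0 := by
      rw [integral_sub (integrable_const _) hgf_int, hgf_eq, integral_const]
      simp
    have hae : (fun t => g b - g (f t)) =ᵐ[μ] 0 :=
      (integral_eq_zero_iff_of_nonneg_ae hnonneg
        ((integrable_const _).sub hgf_int)).mp hint0
    set A' : Set S := {t | t ∈ A ∧ g (f t) = g b} with hA'def
    have hA' : ∀ᵐ t ∂μ, t ∈ A' := by
      filter_upwards [hA, hae] with t ht ht2
      refine ⟨ht, ?_⟩
      have : g b - g (f t) = 0 := ht2
      linarith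
    -- a point with g (f p) = g b
    have hne : ∃ t, t ∈ A' := by
      have : (Filter.NeBot (ae μ)) := ae_neBot.mpr (IsProbabilityMeasure.ne_zero μ)
      exact hA'.exists
    obtain ⟨t₀, ht₀⟩ := hne
    -- a point y ∈ f '' A with g y < g b
    have hy : ∃ y ∈ f '' A, g y < g b := by
      by_contra h
      push_neg at h
      have hsub : f '' A ⊆ {x | g x = g b} := by
        intro y hy
        exact le_antisymm (hg1 _ (subset_convexHull ℝ _ hy)) (h y hy)
      have hconv : Convex ℝ {x : E | g x = g b} := by
        have : {x : E | g x = g b} = (⇑g) ⁻¹' {g b} := rfl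
        rw [this]
        exact (convex_singleton (g b)).linear_preimage (g : E →ₗ[ℝ] ℝ)
      have := convexHull_min hsub hconv hx₀C
      exact absurd this (by simpa using hx₀.ne)
    obtain ⟨y, hyA, hylt⟩ := hy
    -- dimension drops
    have hsub' : vectorSpan ℝ (f '' A') ≤ vectorSpan ℝ (f '' A) ⊓ LinearMap.ker (g : E →ₗ[ℝ] ℝ) := by
      refine le_inf (vectorSpan_mono ℝ (image_mono (f := f) fun t ht => ht.1)) ?_
      rw [vectorSpan_def, Submodule.span_le]
      rintro v ⟨v1, hv1, v2, hv2, rfl⟩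
      obtain ⟨s1, hs1, rfl⟩ := hv1
      obtain ⟨s2, hs2, rfl⟩ := hv2
      simp only [SetLike.mem_coe, LinearMap.mem_ker]
      have : g (f s1 -ᵥ f s2) = g (f s1) - g (f s2) := by
        simp [vsub_eq_sub]
      rw [ContinuousLinearMap.coe_coe]
      rw [this, hs1.2, hs2.2, sub_self]
    have hlt_dim : vectorSpan ℝ (f '' A) ⊓ LinearMap.ker (g : E →ₗ[ℝ] ℝ) < vectorSpan ℝ (f '' A) := by
      refine lt_of_le_of_ne inf_le_left ?_
      intro heq
      have hu : y - f t₀ ∈ vectorSpan ℝ (f '' A) := by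
        have := vsub_mem_vectorSpan ℝ hyA (mem_image_of_mem f ht₀.1)
        simpa [vsub_eq_sub] using this
      rw [← heq] at hu
      have h3 : (g : E →ₗ[ℝ] ℝ) (y - f t₀) = 0 := hu.2
      simp only [ContinuousLinearMap.coe_coe, map_sub] at h3
      rw [ht₀.2] at h3
      linarith
    have hd' : Module.finrank ℝ (vectorSpan ℝ (f '' A')) < d := by
      calc Module.finrank ℝ ↥(vectorSpan ℝ (f '' A'))
          ≤ Module.finrank ℝ ↥(vectorSpan ℝ (f '' A) ⊓ LinearMap.ker (g : E →ₗ[ℝ] ℝ)) :=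
            Submodule.finrank_mono hsub'
        _ < Module.finrank ℝ ↥(vectorSpan ℝ (f '' A)) := Submodule.finrank_lt_finrank_of_lt hlt_dim
        _ ≤ d := hd
    have := IH _ hd' μ f A' hf hA' le_rfl
    exact convexHull_mono (image_mono (f := f) fun t ht => ht.1) this

theorem integral_mem_convexHull (n : ℕ) (S : Type*) [MeasurableSpace S]
    (μ : Measure S) [IsProbabilityMeasure μ] (X : S → (Fin n → ℝ))
    (hX : ∀ i, Integrable (fun t => X t i) μ) :
    (fun i => ∫ t, X t i ∂μ) ∈ convexHull ℝ (Set.range X) := by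
  have hXint : Integrable X μ := by
    have hX' : X = fun t => ∑ i, X t i • (Pi.single i (1 : ℝ) : Fin n → ℝ) := by
      funext t
      ext j
      simp [Finset.sum_apply, Pi.single_apply, Finset.sum_ite_eq']
    rw [hX']
    exact integrable_finset_sum _ fun i _ => (hX i).smul_const _
  have hcoord : (fun i => ∫ t, X t i ∂μ) = ∫ t, X t ∂μ := by
    funext i
    have := (ContinuousLinearMap.proj (R := ℝ) (φ := fun _ : Fin n => ℝ) i).integral_comp_comm hXint
    simpa using this
  rw [hcoord, ← Set.image_univ]
  exact integral_mem_convexHull_image _ μ X Set.univ hXint (by simp) le_rfl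
end

section
/- Under axioms A1 (E of a constant c equals c), A2 (linearity of E), and A3 (for X with E X = 0, either P(X=0)=1 or X takes both a strictly positive and a strictly negative value), the functional E is positive: if X(s) ≥ 0 for all s, then E X ≥ 0. -/
/-- Indicator function of a set, with value 1. -/
noncomputable def ind {S : Type*} (B : Set S) : S → ℝ := Set.indicator B (fun _ => 1)

/-- The set function `P(B) = E(1_B)` derived from the functional `E`. -/
noncomputable def Pfun {S : Type*} (E : (S → ℝ) → ℝ) (B : Set S) : ℝ := E (ind B)

/-- `F` is an algebra of subsets of `S`. -/
def IsSetAlgebra' {S : Type*} (F : Set (Set S)) : Prop :=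
  Set.univ ∈ F ∧ (∀ B ∈ F, Bᶜ ∈ F) ∧ ∀ A ∈ F, ∀ B ∈ F, A ∪ B ∈ F

/-- C1: the function space is closed under linear combinations. -/
def CondC1 {S : Type*} (Sp : Set (S → ℝ)) : Prop :=
  ∀ X ∈ Sp, ∀ Y ∈ Sp, ∀ a b : ℝ, (fun s => a * X s + b * Y s) ∈ Sp

/-- C2: indicators of sets in `F` belong to the function space. -/
def CondC2 {S : Type*} (F : Set (Set S)) (Sp : Set (S → ℝ)) : Prop :=
  ∀ B ∈ F, ind B ∈ Sp

/-- C3: preimages of intervals under members of the space belong to `F`. -/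
def CondC3 {S : Type*} (F : Set (Set S)) (Sp : Set (S → ℝ)) : Prop :=
  ∀ X ∈ Sp, ∀ J : Set ℝ, J.OrdConnected → {s | X s ∈ J} ∈ F

/-- C4: truncation closure for nonnegative functions. -/
def CondC4 {S : Type*} (Sp : Set (S → ℝ)) : Prop :=
  ∀ X ∈ Sp, (∀ s, 0 ≤ X s) → ∀ J : Set ℝ, J.OrdConnected →
    (fun s => X s * ind {t | X t ∈ J} s) ∈ Sp

/-- C5: null-set condition. -/
def CondC5 {S : Type*} (F : Set (Set S)) (Sp : Set (S → ℝ)) (E : (S → ℝ) → ℝ) : Prop :=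
  ∀ X ∈ Sp, ∀ N ∈ F, Pfun E N = 0 →
    (fun s => X s * ind N s) ∈ Sp ∧ E (fun s => X s * ind N s) = 0

/-- A1: `E` of a constant equals that constant. -/
def AxA1 {S : Type*} (E : (S → ℝ) → ℝ) : Prop := ∀ c : ℝ, E (fun _ => c) = c

/-- A2: linearity of `E` on the function space. -/
def AxA2 {S : Type*} (Sp : Set (S → ℝ)) (E : (S → ℝ) → ℝ) : Prop :=
  ∀ X ∈ Sp, ∀ Y ∈ Sp, ∀ a b : ℝ, E (fun s => a * X s + b * Y s) = a * E X + b * E Y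

/-- A3: if `E X = 0` then either `P(X = 0) = 1` or `X` changes sign. -/
def AxA3 {S : Type*} (Sp : Set (S → ℝ)) (E : (S → ℝ) → ℝ) : Prop :=
  ∀ X ∈ Sp, E X = 0 → Pfun E {s | X s = 0} = 1 ∨ ∃ s₁ s₂, X s₁ * X s₂ < 0

/-- A3': if `X ≥ 0` everywhere and `E X = 0` then `P(X = 0) = 1`. -/
def AxA3' {S : Type*} (Sp : Set (S → ℝ)) (E : (S → ℝ) → ℝ) : Prop :=
  ∀ X ∈ Sp, (∀ s, 0 ≤ X s) → E X = 0 → Pfun E {s | X s = 0} = 1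

/-- Lemma 2.2 (positivity): under A1, A2, A3, if `X ≥ 0` everywhere then `E X ≥ 0`. -/
theorem E_positivity (S : Type*) [Nonempty S]
    (F : Set (Set S)) (Sp : Set (S → ℝ)) (E : (S → ℝ) → ℝ)
    (hF : IsSetAlgebra' F) (hC1 : CondC1 Sp) (hC2 : CondC2 F Sp)
    (hA1 : AxA1 E) (hA2 : AxA2 Sp E) (hA3 : AxA3 Sp E) :
    ∀ X ∈ Sp, (∀ s, 0 ≤ X s) → 0 ≤ E X := by
  intro X hX hXpos
  by_contra hneg
  push_neg at hneg
  set c := E X with hc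
  have huniv : ind (Set.univ : Set S) = fun _ => (1 : ℝ) := by
    funext s; simp [ind]
  have hone : ind (Set.univ : Set S) ∈ Sp := hC2 _ hF.1
  -- Y = X - c
  have hY : (fun s => (1:ℝ) * X s + (-c) * ind Set.univ s) ∈ Sp := hC1 X hX _ hone 1 (-c)
  have hEY : E (fun s => (1:ℝ) * X s + (-c) * ind Set.univ s) = 0 := by
    rw [hA2 X hX _ hone 1 (-c), huniv, hA1 1]; ring
  have hYpos : ∀ s, 0 < (1:ℝ) * X s + (-c) * ind Set.univ s := by
    intro s
    rw [huniv]
    have := hXpos s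
    simp only [one_mul, mul_one]
    linarith
  rcases hA3 _ hY hEY with h | ⟨s₁, s₂, hs⟩
  · have hempty : {s | (1:ℝ) * X s + (-c) * ind Set.univ s = 0} = (∅ : Set S) := by
      ext s; simpa using (hYpos s).ne'
    rw [hempty] at h
    have : ind (∅ : Set S) = fun _ => (0:ℝ) := by funext s; simp [ind]
    rw [Pfun, this, hA1 0] at h
    norm_num at h
  · nlinarith [hYpos s₁, hYpos s₂]
end

section
/- If P is a strongly finitely additive probability on (S,F), i.e., there exist countably many disjoint sets H₁,H₂,… ∈ F with ⋃ H_i = S and P(H_i) = 0 for all i, then axiom A3' fails for any positive linear functional E extending integration against P: the function X defined by X(s) = 1/i for s ∈ H_i satisfies X > 0 everywhere yet E X = 0. -/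
/-- Lemma 2.8: if `P` is a strongly finitely additive probability, witnessed by a
countable partition `H` of `S` into `P`-null sets in `F`, then axiom A3' fails for any
positive linear functional `E` extending integration against `P`: the function
`X(s) = 1/i` for `s ∈ H i` is everywhere strictly positive yet `E X = 0`. -/
theorem sfap_fails_A3 (S : Type*) [Nonempty S]
    (F : Set (Set S)) (E : (S → ℝ) → ℝ)
    (hF : IsSetAlgebra' F)
    (H : ℕ → Set S) (hHF : ∀ i, H i ∈ F)
    (hHdisj : Pairwise (Function.onFun Disjoint H))
    (hHcover : (⋃ i, H i) = Set.univ)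
    (hHnull : ∀ i, Pfun E (H i) = 0)
    (hEadd : ∀ Y Z : S → ℝ, E (fun s => Y s + Z s) = E Y + E Z)
    (hEsmul : ∀ (a : ℝ) (Y : S → ℝ), E (fun s => a * Y s) = a * E Y)
    (hpos : ∀ Y : S → ℝ, (∀ s, 0 ≤ Y s) → 0 ≤ E Y)
    (X : S → ℝ) (hX : ∀ i, ∀ s ∈ H i, X s = 1 / ((i : ℝ) + 1)) :
    (∀ s, 0 < X s) ∧ E X = 0 := by
  -- every point lies in some H i
  have hmem : ∀ s : S, ∃ i, s ∈ H i := by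
    intro s
    have : s ∈ (⋃ i, H i) := by rw [hHcover]; trivial
    simpa using this
  have hXpos : ∀ s, 0 < X s := by
    intro s
    obtain ⟨i, hi⟩ := hmem s
    rw [hX i s hi]
    positivity
  refine ⟨hXpos, ?_⟩
  -- E of the zero function is 0
  have hE0 : E (fun _ => (0 : ℝ)) = 0 := by
    have := hEsmul 0 X
    simpa using this
  -- partial sums W k
  set W : ℕ → S → ℝ := fun k s => ∑ i ∈ Finset.range k, (1 / ((i : ℝ) + 1)) * ind (H i) s
    with hW
  have hEW : ∀ k, E (W k) = 0 := by
    intro k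
    induction k with
    | zero => simpa [hW] using hE0
    | succ k ih =>
      have hstep : E (W (k + 1)) = E (W k) + E (fun s => (1 / ((k : ℝ) + 1)) * ind (H k) s) := by
        have : W (k + 1) = fun s => W k s + (1 / ((k : ℝ) + 1)) * ind (H k) s := by
          funext s; simp [hW, Finset.sum_range_succ]
        rw [this, hEadd]
      have hk : E (fun s => (1 / ((k : ℝ) + 1)) * ind (H k) s) = 0 := by
        rw [hEsmul]
        have := hHnull k
        unfold Pfun at this
        rw [this, mul_zero]
      rw [hstep, ih, hk, add_zero]
  set c : ℝ := E (fun _ => (1 : ℝ)) with hc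
  have hc0 : 0 ≤ c := hpos _ (fun s => zero_le_one)
  -- indicator values
  have hindnn : ∀ (B : Set S) (s : S), 0 ≤ ind B s := fun B s =>
    Set.indicator_nonneg (fun _ _ => zero_le_one) s
  have hind1 : ∀ (B : Set S) (s : S), s ∈ B → ind B s = 1 := fun B s hs =>
    Set.indicator_of_mem hs _
  -- key pointwise bound: X s ≤ W k s + 1/(k+1)
  have hbound : ∀ k s, X s ≤ W k s + 1 / ((k : ℝ) + 1) := by
    intro k s
    obtain ⟨j, hj⟩ := hmem s
    have hXs : X s = 1 / ((j : ℝ) + 1) := hX j s hj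
    have hWnn : 0 ≤ W k s := by
      apply Finset.sum_nonneg
      intro i _
      exact mul_nonneg (by positivity) (hindnn _ _)
    by_cases hjk : j < k
    · have hterm : (1 / ((j : ℝ) + 1)) * ind (H j) s ≤ W k s := by
        apply Finset.single_le_sum (f := fun i : ℕ => (1 / ((i : ℝ) + 1)) * ind (H i) s)
        · intro i _
          exact mul_nonneg (by positivity) (hindnn _ _)
        · exact Finset.mem_range.mpr hjk
      rw [hind1 (H j) s hj, mul_one] at hterm
      have h1 : (0:ℝ) ≤ 1 / ((k : ℝ) + 1) := by positivity
      rw [hXs]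
      linarith
    · push_neg at hjk
      have : (1 : ℝ) / ((j : ℝ) + 1) ≤ 1 / ((k : ℝ) + 1) := by
        apply one_div_le_one_div_of_le
        · positivity
        · have : (k : ℝ) ≤ (j : ℝ) := by exact_mod_cast hjk
          linarith
      rw [hXs]; linarith
  -- E X ≤ c/(k+1) for all k
  have hkey : ∀ k : ℕ, E X ≤ c / ((k : ℝ) + 1) := by
    intro k
    have hg : ∀ s, 0 ≤ W k s + ((1 / ((k : ℝ) + 1)) * 1 + (-1) * X s) := by
      intro s
      have := hbound k s
      ring_nf
      ring_nf at this
      linarith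
    have h1 : 0 ≤ E (fun s => W k s + ((1 / ((k : ℝ) + 1)) * (fun _ => (1:ℝ)) s + (-1) * X s)) :=
      hpos _ (by simpa using hg)
    have h2 : E (fun s => W k s + ((1 / ((k : ℝ) + 1)) * (fun _ => (1:ℝ)) s + (-1) * X s))
        = E (W k) + E (fun s => (1 / ((k : ℝ) + 1)) * (fun _ => (1:ℝ)) s + (-1) * X s) :=
      hEadd _ _
    have h3 : E (fun s => (1 / ((k : ℝ) + 1)) * (fun _ => (1:ℝ)) s + (-1) * X s)
        = E (fun s => (1 / ((k : ℝ) + 1)) * (fun _ => (1:ℝ)) s) + E (fun s => (-1) * X s) :=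
      hEadd _ _
    have h4 : E (fun s => (1 / ((k : ℝ) + 1)) * (fun _ => (1:ℝ)) s) = (1 / ((k : ℝ) + 1)) * c :=
      hEsmul _ _
    have h5 : E (fun s => (-1) * X s) = (-1) * E X := hEsmul _ _
    rw [h2, h3, h4, h5, hEW k] at h1
    have : E X ≤ (1 / ((k : ℝ) + 1)) * c := by linarith
    calc E X ≤ (1 / ((k : ℝ) + 1)) * c := this
      _ = c / ((k : ℝ) + 1) := by ring
  have hEXnn : 0 ≤ E X := hpos X (fun s => le_of_lt (hXpos s))
  -- conclude E X = 0 via Archimedean property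
  by_contra hne
  have hEXpos : 0 < E X := lt_of_le_of_ne hEXnn (Ne.symm hne)
  obtain ⟨k, hk⟩ := exists_nat_gt (c / E X)
  have hkpos : (0:ℝ) < (k : ℝ) + 1 := by positivity
  have hlt : c / ((k : ℝ) + 1) < E X := by
    rw [div_lt_iff₀ hkpos]
    have h2 : (c / E X) * E X < (k : ℝ) * E X := mul_lt_mul_of_pos_right hk hEXpos
    have h3 : (c / E X) * E X = c := div_mul_cancel₀ c (ne_of_gt hEXpos)
    nlinarith
  exact absurd (hkey k) (not_le.mpr hlt)
end

section
/- Let E be a functional on ℝⁿ-valued functions X = (X₁,…,Xₙ) on a set S given componentwise by a scalar functional satisfying axioms A1, A2, A3' and conditions C1-C5. Then the vector E X = (E X₁, …, E Xₙ) belongs to the convex hull of X(S) = {X(t) : t ∈ S} ⊆ ℝⁿ. -/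
open Set Filter Topology Module Pointwise

lemma submodule_span_convexHull' {W : Type*} [AddCommGroup W] [Module ℝ W] (s : Set W) :
    Submodule.span ℝ (convexHull ℝ s) = Submodule.span ℝ s :=
  le_antisymm
    (Submodule.span_le.2 (convexHull_min Submodule.subset_span (Submodule.span ℝ s).convex))
    (Submodule.span_mono (subset_convexHull ℝ s))

lemma exists_support' {W : Type*} [NormedAddCommGroup W] [NormedSpace ℝ W] [FiniteDimensional ℝ W]
    {D : Set W} (hD : Convex ℝ D) (h0c : (0:W) ∈ closure D) (h0 : (0:W) ∉ D)
    (hspan : Submodule.span ℝ D = ⊤) :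
    ∃ f : W →L[ℝ] ℝ, (∀ x ∈ D, 0 ≤ f x) ∧ ∃ x ∈ D, 0 < f x := by
  -- affine span is top
  have haff : affineSpan ℝ D = ⊤ := by
    have h0aff : (0:W) ∈ (affineSpan ℝ D : Set W) := by
      have hclosed : IsClosed (affineSpan ℝ D : Set W) :=
        (affineSpan ℝ D).closed_of_finiteDimensional
      exact hclosed.closure_subset_iff.2 (subset_affineSpan ℝ D) h0c
    rw [eq_top_iff]
    intro x _
    have hx : x ∈ Submodule.span ℝ D := by rw [hspan]; trivial
    refine Submodule.span_induction ?_ ?_ ?_ ?_ hx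
    · exact fun y hy => subset_affineSpan ℝ D hy
    · exact h0aff
    · intro y z _ _ hy hz
      have := AffineSubspace.vadd_mem_of_mem_direction
        (AffineSubspace.vsub_mem_direction hy h0aff) hz
      simpa [vsub_eq_sub] using this
    · intro a y _ hy
      have := (affineSpan ℝ D).smul_vsub_vadd_mem a hy h0aff h0aff
      simpa [vsub_eq_sub] using this
  have hint : (interior D).Nonempty := hD.interior_nonempty_iff_affineSpan_eq_top.2 haff
  -- 0 not in interior of closure
  have hni : (0:W) ∉ interior (closure D) := by
    intro h0i
    obtain ⟨w, hw⟩ := hint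
    rcases eq_or_ne w 0 with rfl | hw0
    · exact h0 (interior_subset hw)
    obtain ⟨ε, hε, hball⟩ := Metric.mem_nhds_iff.1 (mem_interior_iff_mem_nhds.1 h0i)
    have hwn : 0 < ‖w‖ := norm_pos_iff.2 hw0
    set t : ℝ := ε / (2 * ‖w‖) with ht
    have htpos : 0 < t := by positivity
    have hy : -(t • w) ∈ closure D := by
      apply hball
      rw [Metric.mem_ball, dist_zero_right, norm_neg, norm_smul, Real.norm_eq_abs,
        abs_of_pos htpos]
      have htw : t * ‖w‖ = ε / 2 := by rw [ht]; field_simp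
      rw [htw]; linarith
    have h0seg : (0:W) ∈ openSegment ℝ w (-(t • w)) := by
      refine ⟨t / (1 + t), 1 / (1 + t), by positivity, by positivity, ?_, ?_⟩
      · field_simp; ring
      · rw [smul_neg, smul_smul, ← sub_eq_add_neg, ← sub_smul]
        rw [show t/(1+t) - 1/(1+t)*t = 0 by field_simp; ring]
        exact zero_smul ℝ w
    exact h0 (interior_subset (hD.openSegment_interior_closure_subset_interior hw hy h0seg))
  -- sequence outside closure D tending to 0
  have hseq : (0:W) ∈ closure ((closure D)ᶜ) := by
    rw [closure_compl]; exact hni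
  obtain ⟨y, hy_mem, hy_tendsto⟩ := mem_closure_iff_seq_limit.1 hseq
  -- for each k, a unit functional separating y k from closure D
  have key : ∀ k : ℕ, ∃ g : W →L[ℝ] ℝ, ‖g‖ = 1 ∧ ∀ x ∈ D, -‖y k‖ ≤ g x := by
    intro k
    obtain ⟨f, u, hfu, hf⟩ :=
      geometric_hahn_banach_point_closed hD.closure isClosed_closure (hy_mem k)
    have hfne : f ≠ 0 := by
      rintro rfl
      have h1 := hf 0 h0c
      simp only [ContinuousLinearMap.zero_apply] at h1 hfu
      linarith
    have hnf : 0 < ‖f‖ := norm_pos_iff.2 hfne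
    refine ⟨‖f‖⁻¹ • f, ?_, ?_⟩
    · rw [norm_smul (‖f‖⁻¹) f, norm_inv, norm_norm, inv_mul_cancel₀ hnf.ne']
    · intro x hx
      have h1 : f (y k) < f x := lt_trans hfu (hf x (subset_closure hx))
      have h2 : (‖f‖⁻¹ • f) (y k) ≤ (‖f‖⁻¹ • f) x := by
        simp only [ContinuousLinearMap.smul_apply, smul_eq_mul]
        exact mul_le_mul_of_nonneg_left h1.le (inv_nonneg.2 hnf.le)
      have h4 : |f (y k)| ≤ ‖f‖ * ‖y k‖ := by
        simpa [Real.norm_eq_abs] using f.le_opNorm (y k)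
      have h5 : -(‖f‖ * ‖y k‖) ≤ f (y k) := by linarith [neg_abs_le (f (y k))]
      have h6 : ‖f‖⁻¹ * ‖f‖ = 1 := inv_mul_cancel₀ hnf.ne'
      have h3 : -‖y k‖ ≤ (‖f‖⁻¹ • f) (y k) := by
        simp only [ContinuousLinearMap.smul_apply, smul_eq_mul]
        have h7 : ‖f‖⁻¹ * -(‖f‖ * ‖y k‖) = -‖y k‖ := by field_simp
        linarith [mul_le_mul_of_nonneg_left h5 (inv_nonneg.2 hnf.le), h7]
      linarith
  choose g hg1 hg2 using key
  have hsph : IsCompact (Metric.sphere (0 : W →L[ℝ] ℝ) 1) := isCompact_sphere _ _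
  have hmem : ∀ k, g k ∈ Metric.sphere (0 : W →L[ℝ] ℝ) 1 := fun k =>
    mem_sphere_zero_iff_norm.2 (hg1 k)
  obtain ⟨gl, hgl_mem, φ, hφ, hconv⟩ := hsph.tendsto_subseq hmem
  have hglnorm : ‖gl‖ = 1 := mem_sphere_zero_iff_norm.1 hgl_mem
  have hpos : ∀ x ∈ D, 0 ≤ gl x := by
    intro x hx
    have h1 : Tendsto (fun k => g (φ k) x) atTop (𝓝 (gl x)) :=
      ((ContinuousLinearMap.apply ℝ ℝ x).continuous.tendsto gl).comp hconv
    have h2 : Tendsto (fun k => -‖y (φ k)‖) atTop (𝓝 (0:ℝ)) := by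
      have h3 : Tendsto (fun k => y (φ k)) atTop (𝓝 (0:W)) :=
        hy_tendsto.comp hφ.tendsto_atTop
      simpa using (h3.norm).neg
    exact le_of_tendsto_of_tendsto' h2 h1 (fun k => hg2 (φ k) x hx)
  refine ⟨gl, hpos, ?_⟩
  by_contra h
  push_neg at h
  have hker : ∀ x, gl x = 0 := by
    intro x
    have hx : x ∈ Submodule.span ℝ D := by rw [hspan]; trivial
    refine Submodule.span_induction ?_ ?_ ?_ ?_ hx
    · exact fun z hz => le_antisymm (h z hz) (hpos z hz)
    · exact gl.map_zero
    · intro a b _ _ ha hb; rw [gl.map_add, ha, hb, add_zero]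
    · intro a z _ hz; rw [gl.map_smul, hz, smul_zero]
  have : gl = 0 := ContinuousLinearMap.ext hker
  rw [this] at hglnorm
  simp at hglnorm


/-- Theorem 2.9: under axioms A1, A2, A3' and conditions C1-C5, the vector
`(E X₁, …, E Xₙ)` belongs to the convex hull of `X(S) ⊆ ℝⁿ`. -/
theorem E_mem_convexHull (n : ℕ) (S : Type*) [Nonempty S]
    (F : Set (Set S)) (Sp : Set (S → ℝ)) (E : (S → ℝ) → ℝ)
    (hF : IsSetAlgebra' F) (hC1 : CondC1 Sp) (hC2 : CondC2 F Sp)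
    (hC3 : CondC3 F Sp) (hC4 : CondC4 Sp) (hC5 : CondC5 F Sp E)
    (hA1 : AxA1 E) (hA2 : AxA2 Sp E) (hA3' : AxA3' Sp E)
    (X : Fin n → (S → ℝ)) (hX : ∀ i, X i ∈ Sp) :
    (fun i => E (X i)) ∈ convexHull ℝ (Set.range (fun t => fun i => X i t)) := by
  classical
  obtain ⟨hFuniv, hFcompl, hFunion⟩ := hF
  have hPdef : ∀ B : Set S, Pfun E B = E (ind B) := fun _ => rfl
  have hone : (fun _ : S => (1:ℝ)) ∈ Sp := by
    have h := hC2 _ hFuniv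
    simpa [ind, Set.indicator_univ] using h
  have hE1 : E (fun _ : S => (1:ℝ)) = 1 := hA1 1
  have hconst : ∀ c : ℝ, (fun _ : S => c) ∈ Sp := by
    intro c
    have h := hC1 _ hone _ hone c 0
    simpa using h
  have hPempty : Pfun E (∅ : Set S) = 0 := by
    have h : ind (∅ : Set S) = fun _ => (0:ℝ) := by funext s; simp [ind]
    rw [hPdef, h]; exact hA1 0
  have hPuniv : Pfun E (Set.univ : Set S) = 1 := by
    have h : ind (Set.univ : Set S) = fun _ => (1:ℝ) := by funext s; simp [ind]
    rw [hPdef, h]; exact hA1 1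
  have hEnonneg : ∀ Y ∈ Sp, (∀ s, 0 ≤ Y s) → 0 ≤ E Y := by
    intro Y hY hYpos
    by_contra hneg
    push_neg at hneg
    have hZSp := hC1 _ hY _ hone 1 (-(E Y))
    have hEZ : E (fun s => 1 * Y s + (-(E Y)) * (fun _ : S => (1:ℝ)) s) = 0 := by
      rw [hA2 _ hY _ hone 1 (-(E Y)), hE1]; ring
    have hnn : ∀ s, (0:ℝ) ≤ 1 * Y s + -(E Y) * 1 := fun s => by nlinarith [hYpos s]
    have hP := hA3' _ hZSp hnn hEZ
    have hP2 : Pfun E {s : S | 1 * Y s + -(E Y) * 1 = 0} = 1 := hP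
    have hempty : {s : S | 1 * Y s + -(E Y) * 1 = 0} = (∅ : Set S) := by
      ext s; simp only [Set.mem_setOf_eq, Set.mem_empty_iff_false, iff_false]
      intro h; nlinarith [hYpos s]
    rw [hempty, hPempty] at hP2; norm_num at hP2
  have hindnn : ∀ B : Set S, ∀ s, 0 ≤ ind B s := by
    intro B s
    exact Set.indicator_nonneg (fun _ _ => by norm_num) s
  have hPnonneg : ∀ B ∈ F, 0 ≤ Pfun E B := fun B hB =>
    hEnonneg _ (hC2 _ hB) (hindnn B)
  have hPcompl : ∀ B ∈ F, Pfun E Bᶜ = 1 - Pfun E B := by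
    intro B hB
    have hiB := hC2 _ hB
    have heq : ind Bᶜ = fun s => 1 * (fun _ : S => (1:ℝ)) s + (-1) * ind B s := by
      funext s; by_cases h : s ∈ B <;> simp [ind, h]
    rw [hPdef, heq, hA2 _ hone _ hiB 1 (-1), hE1, hPdef]; ring
  have hPle1 : ∀ B ∈ F, Pfun E B ≤ 1 := by
    intro B hB
    have h := hPnonneg _ (hFcompl _ hB)
    rw [hPcompl _ hB] at h; linarith
  have hinter : ∀ A ∈ F, ∀ B ∈ F, A ∩ B ∈ F := by
    intro A hA B hB
    have h := hFcompl _ (hFunion _ (hFcompl _ hA) _ (hFcompl _ hB))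
    simpa [Set.compl_union, compl_compl] using h
  have hPinter : ∀ A ∈ F, ∀ B ∈ F, Pfun E A = 1 → Pfun E B = 1 → Pfun E (A ∩ B) = 1 := by
    intro A hA B hB hPA hPB
    have hU : A ∪ B ∈ F := hFunion _ hA _ hB
    have hI : A ∩ B ∈ F := hinter _ hA _ hB
    have heq : (fun s => 1 * ind A s + 1 * ind B s)
        = (fun s => 1 * ind (A ∪ B) s + 1 * ind (A ∩ B) s) := by
      funext s; by_cases hsA : s ∈ A <;> by_cases hsB : s ∈ B <;>
        simp [ind, hsA, hsB]
    have h1 := hA2 _ (hC2 _ hA) _ (hC2 _ hB) 1 1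
    have h2 := hA2 _ (hC2 _ hU) _ (hC2 _ hI) 1 1
    rw [heq, h2] at h1
    have h3 := hPle1 _ hU
    have h4 := hPle1 _ hI
    rw [hPdef] at hPA hPB h3 h4 ⊢
    linarith
  have hTne : ∀ T : Set S, Pfun E T = 1 → T.Nonempty := by
    intro T hT
    rw [Set.nonempty_iff_ne_empty]
    rintro rfl
    rw [hPempty] at hT; norm_num at hT
  have hsum : ∀ c : Fin n → ℝ,
      (fun s => ∑ i, c i * X i s) ∈ Sp ∧
        E (fun s => ∑ i, c i * X i s) = ∑ i, c i * E (X i) := by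
    intro c
    have hgen : ∀ A : Finset (Fin n),
        (fun s => ∑ i ∈ A, c i * X i s) ∈ Sp ∧
          E (fun s => ∑ i ∈ A, c i * X i s) = ∑ i ∈ A, c i * E (X i) := by
      intro A
      induction A using Finset.induction_on with
      | empty =>
        constructor
        · simpa using hconst 0
        · simpa using hA1 0
      | @insert a A ha ih =>
        obtain ⟨ihSp, ihE⟩ := ih
        have hSp := hC1 _ (hX a) _ ihSp (c a) 1
        have hE := hA2 _ (hX a) _ ihSp (c a) 1
        have heq : (fun s => ∑ i ∈ insert a A, c i * X i s)
            = fun s => c a * X a s + 1 * ((fun s => ∑ i ∈ A, c i * X i s) s) := by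
          funext s; rw [Finset.sum_insert ha]; ring
        rw [heq]
        refine ⟨hSp, ?_⟩
        rw [hE, ihE, Finset.sum_insert ha]; ring
    exact hgen Finset.univ
  set v : Fin n → ℝ := fun i => E (X i) with hvdef
  set vecX : S → (Fin n → ℝ) := fun t i => X i t with hvecXdef
  have key : ∀ d : ℕ, ∀ T : Set S, T ∈ F → Pfun E T = 1 →
      Module.finrank ℝ (Submodule.span ℝ ((fun x => x - v) '' (vecX '' T))) ≤ d →
      v ∈ convexHull ℝ (vecX '' T) := by
    intro d
    induction d with
    | zero =>
      intro T hTF hTP hrank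
      have hbot : Submodule.span ℝ ((fun x => x - v) '' (vecX '' T)) = ⊥ :=
        Submodule.finrank_eq_zero.1 (Nat.le_zero.1 hrank)
      obtain ⟨t, ht⟩ := hTne T hTP
      have hmem : vecX t - v ∈ Submodule.span ℝ ((fun x => x - v) '' (vecX '' T)) :=
        Submodule.subset_span ⟨vecX t, ⟨t, ht, rfl⟩, rfl⟩
      rw [hbot, Submodule.mem_bot, sub_eq_zero] at hmem
      exact subset_convexHull ℝ _ ⟨t, ht, hmem⟩
    | succ d ih =>
      intro T hTF hTP hrank
      by_cases hvC : v ∈ convexHull ℝ (vecX '' T)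
      · exact hvC
      have hTc_F : Tᶜ ∈ F := hFcompl _ hTF
      have hPTc : Pfun E Tᶜ = 0 := by rw [hPcompl _ hTF, hTP]; ring
      have hindTc : ind Tᶜ ∈ Sp := hC2 _ hTc_F
      have hCconv : Convex ℝ (convexHull ℝ (vecX '' T)) := convex_convexHull ℝ _
      have hindTcT : ∀ s ∈ T, ind Tᶜ s = 0 := fun s hs =>
        Set.indicator_of_notMem (by simpa using hs) _
      have hindTcT' : ∀ s, s ∉ T → ind Tᶜ s = 1 := fun s hs =>
        Set.indicator_of_mem (by simpa using hs) _
      -- Step A : v lies in the closure of the convex hull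
      have hvcl : v ∈ closure (convexHull ℝ (vecX '' T)) := by
        by_contra hvcl
        obtain ⟨f, u, hfv, hfC⟩ :=
          geometric_hahn_banach_point_closed hCconv.closure isClosed_closure hvcl
        set c : Fin n → ℝ := fun i => f (fun j => if i = j then (1:ℝ) else 0) with hcdef
        have hfy : ∀ y : Fin n → ℝ, f y = ∑ i, c i * y i := by
          intro y
          have h := LinearMap.pi_apply_eq_sum_univ (f : (Fin n → ℝ) →ₗ[ℝ] ℝ) y
          simpa [hcdef, smul_eq_mul, mul_comm] using h
        obtain ⟨hgSp, hEg⟩ := hsum c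
        set g : S → ℝ := fun s => ∑ i, c i * X i s with hgdef
        have hEgv : E g = f v := by rw [hEg, hfy v]
        set Z : S → ℝ := fun s => g s - f v with hZdef
        have hZeq : Z = fun s => 1 * g s + (-(f v)) * (fun _ : S => (1:ℝ)) s :=
          funext fun s => by show g s - f v = 1 * g s + (-(f v)) * 1; ring
        have hZSp : Z ∈ Sp := by rw [hZeq]; exact hC1 _ hgSp _ hone 1 (-(f v))
        have hEZ : E Z = 0 := by
          rw [hZeq, hA2 _ hgSp _ hone 1 (-(f v)), hEgv, hE1]; ring
        obtain ⟨hZNSp, hEZN⟩ := hC5 Z hZSp Tᶜ hTc_F hPTc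
        have hA1Sp : (fun s => 1 * Z s + (-1) * (fun s => Z s * ind Tᶜ s) s) ∈ Sp :=
          hC1 _ hZSp _ hZNSp 1 (-1)
        have hEA1 : E (fun s => 1 * Z s + (-1) * (fun s => Z s * ind Tᶜ s) s) = 0 := by
          rw [hA2 _ hZSp _ hZNSp 1 (-1), hEZ, hEZN]; ring
        set W : S → ℝ := fun s => Z s - Z s * ind Tᶜ s + (u - f v) * ind Tᶜ s with hWdef
        have hWeq : W = fun s =>
            1 * ((fun s => 1 * Z s + (-1) * (fun s => Z s * ind Tᶜ s) s) s)
              + (u - f v) * ind Tᶜ s :=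
          funext fun s => by
            show Z s - Z s * ind Tᶜ s + (u - f v) * ind Tᶜ s
              = 1 * (1 * Z s + (-1) * (Z s * ind Tᶜ s)) + (u - f v) * ind Tᶜ s
            ring
        have hWSp : W ∈ Sp := by rw [hWeq]; exact hC1 _ hA1Sp _ hindTc 1 (u - f v)
        have hEW : E W = 0 := by
          rw [hWeq, hA2 _ hA1Sp _ hindTc 1 (u - f v), hEA1, ← hPdef, hPTc]; ring
        have hufv : f v < u := hfv
        have hWpos : ∀ s, 0 < W s := by
          intro s
          by_cases hs : s ∈ T
          · have h0 : ind Tᶜ s = 0 := hindTcT s hs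
            have hgs : g s = f (vecX s) := (hfy (vecX s)).symm
            have hfs : u < f (vecX s) :=
              hfC _ (subset_closure (subset_convexHull ℝ _ ⟨s, hs, rfl⟩))
            have : W s = Z s := by rw [hWdef]; simp [h0]
            rw [this, hZdef]
            simp only
            rw [hgs]
            linarith
          · have h1 : ind Tᶜ s = 1 := hindTcT' s hs
            have : W s = u - f v := by rw [hWdef]; simp [h1]
            rw [this]; linarith
        have hP := hA3' W hWSp (fun s => (hWpos s).le) hEW
        have hempty : {s : S | W s = 0} = (∅ : Set S) := by
          ext s; simp only [Set.mem_setOf_eq, Set.mem_empty_iff_false, iff_false]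
          exact (hWpos s).ne'
        rw [hempty, hPempty] at hP; norm_num at hP
      -- Step B : supporting linear functional
      have himgset : ∀ s : Set (Fin n → ℝ), (fun x => x - v) '' s = -v +ᵥ s := by
        intro s; ext y
        simp only [Set.mem_image, Set.mem_vadd_set]
        constructor
        · rintro ⟨x, hx, rfl⟩
          exact ⟨x, hx, by show -v + x = x - v; abel⟩
        · rintro ⟨x, hx, rfl⟩
          exact ⟨x, hx, by show x - v = -v +ᵥ x; rw [vadd_eq_add]; abel⟩
      have hspanhull : Submodule.span ℝ ((fun x => x - v) '' (convexHull ℝ (vecX '' T)))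
          = Submodule.span ℝ ((fun x => x - v) '' (vecX '' T)) := by
        rw [himgset, himgset, ← convexHull_vadd, submodule_span_convexHull']
      set V : Submodule ℝ (Fin n → ℝ) :=
        Submodule.span ℝ ((fun x => x - v) '' (convexHull ℝ (vecX '' T))) with hVdef
      have hDconv : Convex ℝ ((fun x => x - v) '' (convexHull ℝ (vecX '' T))) := by
        rw [himgset]; exact hCconv.vadd _
      have h0cl : (0 : Fin n → ℝ) ∈ closure ((fun x => x - v) '' (convexHull ℝ (vecX '' T))) := by
        have hc : Continuous (fun x : Fin n → ℝ => x - v) := continuous_id.sub continuous_const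
        exact image_closure_subset_closure_image hc ⟨v, hvcl, sub_self v⟩
      have h0D : (0 : Fin n → ℝ) ∉ (fun x => x - v) '' (convexHull ℝ (vecX '' T)) := by
        rintro ⟨x, hxC, hx0⟩
        have hxv : x = v := by rwa [sub_eq_zero] at hx0
        exact hvC (hxv ▸ hxC)
      have hDVsub : ((fun x => x - v) '' (convexHull ℝ (vecX '' T))) ⊆ (V : Set (Fin n → ℝ)) :=
        Submodule.subset_span
      set DV : Set V := (Subtype.val : V → (Fin n → ℝ)) ⁻¹'
        ((fun x => x - v) '' (convexHull ℝ (vecX '' T))) with hDVdef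
      have hDVconv : Convex ℝ DV := hDconv.linear_preimage V.subtype
      have hvalim : (Subtype.val : V → (Fin n → ℝ)) '' DV
          = (fun x => x - v) '' (convexHull ℝ (vecX '' T)) := by
        ext x
        constructor
        · rintro ⟨⟨x', hx'⟩, hxD, rfl⟩
          exact hxD
        · intro hx
          exact ⟨⟨x, hDVsub hx⟩, hx, rfl⟩
      have h0DV : (0 : V) ∈ closure DV := by
        rw [closure_subtype, hvalim]
        simpa using h0cl
      have h0nDV : (0 : V) ∉ DV := fun h => h0D (by simpa [hDVdef] using h)
      have hspanDV : Submodule.span ℝ DV = ⊤ := by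
        apply Submodule.map_injective_of_injective (Submodule.injective_subtype V)
        rw [Submodule.map_span, Submodule.map_subtype_top]
        rw [show (V.subtype : V → (Fin n → ℝ)) '' DV
          = (fun x => x - v) '' (convexHull ℝ (vecX '' T)) from hvalim]
      obtain ⟨f, hfpos, x₀, hx₀DV, hfx₀⟩ := exists_support' hDVconv h0DV h0nDV hspanDV
      obtain ⟨q, hq⟩ := Submodule.exists_isCompl V
      set π : (Fin n → ℝ) →ₗ[ℝ] V := V.projectionOnto q hq with hπdef
      set Φ : (Fin n → ℝ) →ₗ[ℝ] ℝ := (f : V →ₗ[ℝ] ℝ) ∘ₗ π with hΦdef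
      have hΦV : ∀ x : V, Φ ↑x = f x := by
        intro x
        rw [hΦdef]
        simp only [LinearMap.comp_apply, hπdef,
          Submodule.projectionOnto_apply_left hq x]
        rfl
      have hΦD : ∀ x ∈ ((fun x => x - v) '' (convexHull ℝ (vecX '' T))), 0 ≤ Φ x := by
        intro x hx
        have hxV : x ∈ V := hDVsub hx
        have h2 : Φ x = f ⟨x, hxV⟩ := hΦV ⟨x, hxV⟩
        rw [h2]
        exact hfpos ⟨x, hxV⟩ hx
      have hΦx₀ : 0 < Φ ↑x₀ := by rw [hΦV x₀]; exact hfx₀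
      have hx₀D : (↑x₀ : Fin n → ℝ) ∈ (fun x => x - v) '' (convexHull ℝ (vecX '' T)) := hx₀DV
      -- Step C : dimension drop
      set c : Fin n → ℝ := fun i => Φ (fun j => if i = j then (1:ℝ) else 0) with hcdef
      have hΦy : ∀ y : Fin n → ℝ, Φ y = ∑ i, c i * y i := by
        intro y
        have h := LinearMap.pi_apply_eq_sum_univ Φ y
        simpa [hcdef, smul_eq_mul, mul_comm] using h
      obtain ⟨hgSp, hEg⟩ := hsum c
      set g : S → ℝ := fun s => ∑ i, c i * X i s with hgdef
      have hEgv : E g = Φ v := by rw [hEg, hΦy v]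
      set Z : S → ℝ := fun s => g s - Φ v with hZdef
      have hZeq : Z = fun s => 1 * g s + (-(Φ v)) * (fun _ : S => (1:ℝ)) s :=
        funext fun s => by show g s - Φ v = 1 * g s + (-(Φ v)) * 1; ring
      have hZSp : Z ∈ Sp := by rw [hZeq]; exact hC1 _ hgSp _ hone 1 (-(Φ v))
      have hEZ : E Z = 0 := by
        rw [hZeq, hA2 _ hgSp _ hone 1 (-(Φ v)), hEgv, hE1]; ring
      obtain ⟨hZNSp, hEZN⟩ := hC5 Z hZSp Tᶜ hTc_F hPTc
      set Z' : S → ℝ := fun s => Z s - Z s * ind Tᶜ s with hZ'def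
      have hZ'eq : Z' = fun s => 1 * Z s + (-1) * (fun s => Z s * ind Tᶜ s) s :=
        funext fun s => by
          show Z s - Z s * ind Tᶜ s = 1 * Z s + (-1) * (Z s * ind Tᶜ s); ring
      have hZ'Sp : Z' ∈ Sp := by rw [hZ'eq]; exact hC1 _ hZSp _ hZNSp 1 (-1)
      have hEZ' : E Z' = 0 := by
        rw [hZ'eq, hA2 _ hZSp _ hZNSp 1 (-1), hEZ, hEZN]; ring
      have hZT : ∀ t ∈ T, Z' t = Φ (vecX t - v) := by
        intro t ht
        have h0 : ind Tᶜ t = 0 := hindTcT t ht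
        have hgs : g t = Φ (vecX t) := (hΦy (vecX t)).symm
        have h1 : Z' t = Z t := by rw [hZ'def]; simp [h0]
        have h2 : Z t = g t - Φ v := rfl
        rw [h1, h2, hgs, map_sub]
      have hZ'nn : ∀ s, 0 ≤ Z' s := by
        intro s
        by_cases hs : s ∈ T
        · rw [hZT s hs]
          exact hΦD _ ⟨vecX s, subset_convexHull ℝ _ ⟨s, hs, rfl⟩, rfl⟩
        · have h1 : ind Tᶜ s = 1 := hindTcT' s hs
          have : Z' s = 0 := by rw [hZ'def]; simp [h1]
          rw [this]
      have hPZ' := hA3' Z' hZ'Sp hZ'nn hEZ'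
      have hGF : {s : S | Z' s = 0} ∈ F := by
        have h := hC3 Z' hZ'Sp {0} Set.ordConnected_singleton
        simpa using h
      have hT'F : T ∩ {s : S | Z' s = 0} ∈ F := hinter _ hTF _ hGF
      have hT'P : Pfun E (T ∩ {s : S | Z' s = 0}) = 1 := hPinter _ hTF _ hGF hTP hPZ'
      have hsub : Submodule.span ℝ ((fun x => x - v) '' (vecX '' (T ∩ {s : S | Z' s = 0})))
          ≤ V ⊓ LinearMap.ker Φ := by
        rw [Submodule.span_le]
        rintro _ ⟨_, ⟨t, ⟨htT, htZ⟩, rfl⟩, rfl⟩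
        refine Submodule.mem_inf.2 ⟨?_, ?_⟩
        · show vecX t - v ∈ V
          rw [hspanhull]
          exact Submodule.subset_span ⟨vecX t, ⟨t, htT, rfl⟩, rfl⟩
        · rw [LinearMap.mem_ker, ← hZT t htT]
          exact htZ
      have hlt : V ⊓ LinearMap.ker Φ < V := by
        refine lt_of_le_of_ne inf_le_left ?_
        intro heqq
        have hmem2 : (↑x₀ : Fin n → ℝ) ∈ V ⊓ LinearMap.ker Φ := by
          rw [heqq]; exact x₀.2
        exact absurd (Submodule.mem_inf.1 hmem2).2
          (by simpa [LinearMap.mem_ker] using hΦx₀.ne')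
      have hrank' : Module.finrank ℝ (Submodule.span ℝ
          ((fun x => x - v) '' (vecX '' (T ∩ {s : S | Z' s = 0})))) ≤ d := by
        have h1 := Submodule.finrank_mono hsub
        have h2 := Submodule.finrank_lt_finrank_of_lt hlt
        have h3 : Module.finrank ℝ V ≤ d + 1 := by rw [hspanhull]; exact hrank
        omega
      exact convexHull_mono (Set.image_mono Set.inter_subset_left)
        (ih _ hT'F hT'P hrank')
  have h0 := key _ Set.univ hFuniv hPuniv le_rfl
  simpa [Set.image_univ] using h0
end

section
/- Let (S,F,𝒮,E,P) satisfy conditions C1-C5 and axioms A1-A2, and let S* ∈ F with P(S*) > 0 be such that X·1_{S*} ∈ 𝒮 for X ∈ 𝒮. Define E*(X|_{S*}) = E(X·1_{S*})/P(S*) and P*(B ∩ S*) = P(B ∩ S*)/P(S*). Then the restricted quintuplet (S*, F*, 𝒮*, E*, P*) satisfies C1-C5 and A1-A2, and if the original quintuplet satisfies A3, so does the restricted one. -/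
lemma ind_mul_ind {S : Type*} (A B : Set S) (s : S) :
    ind A s * ind B s = ind (A ∩ B) s := by
  by_cases hA : s ∈ A <;> by_cases hB : s ∈ B <;>
    simp [ind, Set.indicator, hA, hB]

lemma ind_preimage {S : Type*} {Sstar : Set S} (B : Set S) (s : ↥Sstar) :
    ind (Subtype.val ⁻¹' B : Set ↥Sstar) s = ind B s.val := by
  by_cases h : s.val ∈ B <;> simp [ind, Set.indicator, h]

lemma inter_mem' {S : Type*} {F : Set (Set S)} (hF : IsSetAlgebra' F)
    {A B : Set S} (hA : A ∈ F) (hB : B ∈ F) : A ∩ B ∈ F := by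
  have := hF.2.1 _ (hF.2.2 _ (hF.2.1 _ hA) _ (hF.2.1 _ hB))
  simpa [Set.compl_union, compl_compl] using this

lemma const_mem' {S : Type*} {F : Set (Set S)} {Sp : Set (S → ℝ)}
    (hF : IsSetAlgebra' F) (hC1 : CondC1 Sp) (hC2 : CondC2 F Sp) (c : ℝ) :
    (fun _ : S => c) ∈ Sp := by
  have h1 : ind (Set.univ : Set S) ∈ Sp := hC2 _ hF.1
  have := hC1 _ h1 _ h1 c 0
  have he : (fun s : S => c * ind Set.univ s + 0 * ind Set.univ s) = fun _ : S => c := by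
    funext s; simp [ind]
  rwa [he] at this

/-- Remark 2.4 (hereditary property): restricting a quintuplet `(S, F, 𝒮, E, P)`
satisfying C1-C5 and A1-A2 to a set `S* ∈ F` with `P(S*) > 0`, with
`E*(X|_{S*}) = E(X·1_{S*})/P(S*)` and `P*(B ∩ S*) = P(B ∩ S*)/P(S*)`, yields a
quintuplet `(S*, F*, 𝒮*, E*, P*)` which again satisfies C1-C5 and A1-A2, and which
satisfies A3 whenever the original quintuplet does. -/
theorem hereditary_property (S : Type*) [Nonempty S]
    (F : Set (Set S)) (Sp : Set (S → ℝ)) (E : (S → ℝ) → ℝ)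
    (hF : IsSetAlgebra' F) (hC1 : CondC1 Sp) (hC2 : CondC2 F Sp)
    (hC3 : CondC3 F Sp) (hC4 : CondC4 Sp) (hC5 : CondC5 F Sp E)
    (hA1 : AxA1 E) (hA2 : AxA2 Sp E)
    (Sstar : Set S) (hSstarF : Sstar ∈ F) (hSstarP : 0 < Pfun E Sstar)
    (hSstarCl : ∀ X ∈ Sp, (fun s => X s * ind Sstar s) ∈ Sp)
    (Estar : (↥Sstar → ℝ) → ℝ)
    (hEstar : ∀ X ∈ Sp,
      Estar (fun s => X s.val) = E (fun s => X s * ind Sstar s) / Pfun E Sstar) :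
    let Fstar : Set (Set ↥Sstar) := {A | ∃ B ∈ F, A = Subtype.val ⁻¹' B}
    let Spstar : Set (↥Sstar → ℝ) := {Y | ∃ X ∈ Sp, Y = fun s => X s.val}
    (∀ B ∈ F, Pfun Estar (Subtype.val ⁻¹' B) = Pfun E (B ∩ Sstar) / Pfun E Sstar) ∧
    IsSetAlgebra' Fstar ∧ CondC1 Spstar ∧ CondC2 Fstar Spstar ∧ CondC3 Fstar Spstar ∧
    CondC4 Spstar ∧ CondC5 Fstar Spstar Estar ∧ AxA1 Estar ∧ AxA2 Spstar Estar ∧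
    (AxA3 Sp E → AxA3 Spstar Estar) := by
  intro Fstar Spstar
  have hPne : Pfun E Sstar ≠ 0 := ne_of_gt hSstarP
  -- key claim on P*
  have hPstar : ∀ B ∈ F, Pfun Estar (Subtype.val ⁻¹' B) = Pfun E (B ∩ Sstar) / Pfun E Sstar := by
    intro B hB
    have h1 : (ind (Subtype.val ⁻¹' B : Set ↥Sstar)) = fun s : ↥Sstar => ind B s.val := by
      funext s; exact ind_preimage B s
    have h2 := hEstar (ind B) (hC2 _ hB)
    have h3 : (fun s => ind B s * ind Sstar s) = ind (B ∩ Sstar) := by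
      funext s; exact ind_mul_ind B Sstar s
    rw [h3] at h2
    unfold Pfun
    rw [h1, h2]
    rfl
  refine ⟨hPstar, ?_, ?_, ?_, ?_, ?_, ?_, ?_, ?_, ?_⟩
  · -- set algebra
    refine ⟨⟨Set.univ, hF.1, by simp⟩, ?_, ?_⟩
    · rintro A ⟨B, hB, rfl⟩
      exact ⟨Bᶜ, hF.2.1 _ hB, by simp⟩
    · rintro A ⟨B, hB, rfl⟩ A' ⟨B', hB', rfl⟩
      exact ⟨B ∪ B', hF.2.2 _ hB _ hB', by simp [Set.preimage_union]⟩
  · -- C1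
    rintro Y ⟨X, hX, rfl⟩ Y' ⟨X', hX', rfl⟩ a b
    exact ⟨_, hC1 _ hX _ hX' a b, rfl⟩
  · -- C2
    rintro A ⟨B, hB, rfl⟩
    refine ⟨ind B, hC2 _ hB, ?_⟩
    funext s; exact ind_preimage B s
  · -- C3
    rintro Y ⟨X, hX, rfl⟩ J hJ
    exact ⟨{s | X s ∈ J}, hC3 _ hX J hJ, rfl⟩
  · -- C4
    rintro Y ⟨X, hX, rfl⟩ hpos J hJ
    set X' : S → ℝ := fun s => X s * ind Sstar s with hX'def
    have hX' : X' ∈ Sp := hSstarCl _ hX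
    have hX'pos : ∀ s, 0 ≤ X' s := by
      intro s
      by_cases h : s ∈ Sstar
      · have := hpos ⟨s, h⟩
        simpa [X', ind, Set.indicator, h] using this
      · simp [X', ind, Set.indicator, h]
    refine ⟨_, hC4 _ hX' hX'pos J hJ, ?_⟩
    funext s
    have hmem : X' s.val = X s.val := by
      simp [X', ind, Set.indicator, s.2]
    have hset : ind {t | X' t ∈ J} s.val = ind {t : ↥Sstar | X t.val ∈ J} s := by
      by_cases h : X s.val ∈ J
      · simp [ind, Set.indicator, hmem, h]
      · simp [ind, Set.indicator, hmem, h]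
    simp only [hmem, hset]
  · -- C5
    rintro Y ⟨X, hX, rfl⟩ A ⟨N, hN, rfl⟩ hAnull
    have hNS : N ∩ Sstar ∈ F := inter_mem' hF hN hSstarF
    have hPNS : Pfun E (N ∩ Sstar) = 0 := by
      have := hPstar N hN
      rw [hAnull] at this
      field_simp at this
      linarith [this]
    obtain ⟨hZ, hEZ⟩ := hC5 X hX (N ∩ Sstar) hNS hPNS
    set Z : S → ℝ := fun s => X s * ind (N ∩ Sstar) s with hZdef
    have heq : (fun s : ↥Sstar => X s.val * ind (Subtype.val ⁻¹' N : Set ↥Sstar) s)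
        = fun s : ↥Sstar => Z s.val := by
      funext s
      have h1 : ind (Subtype.val ⁻¹' N : Set ↥Sstar) s = ind (N ∩ Sstar) s.val := by
        by_cases h : s.val ∈ N
        · simp [ind, Set.indicator, h, s.2]
        · simp [ind, Set.indicator, h]
      rw [h1]
    constructor
    · exact heq ▸ ⟨Z, hZ, rfl⟩
    · rw [heq, hEstar Z hZ]
      have hZS : (fun s => Z s * ind Sstar s) = Z := by
        funext s
        by_cases h : s ∈ Sstar
        · simp [Z, ind, Set.indicator, h]
        · simp [Z, ind, Set.indicator, h]
      rw [hZS, hEZ, zero_div]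
  · -- A1
    intro c
    have hc : (fun _ : S => c) ∈ Sp := const_mem' hF hC1 hC2 c
    have h := hEstar _ hc
    have hcomb : (fun s : S => c * ind Sstar s) = fun s => c * ind Sstar s + 0 * ind Sstar s := by
      funext s; ring
    have hE2 : E (fun s : S => c * ind Sstar s) = c * Pfun E Sstar := by
      rw [hcomb, hA2 _ (hC2 _ hSstarF) _ (hC2 _ hSstarF) c 0]
      simp [Pfun]
    calc Estar (fun _ => c) = Estar (fun s : ↥Sstar => (fun _ : S => c) s.val) := rfl
      _ = E (fun s : S => c * ind Sstar s) / Pfun E Sstar := h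
      _ = c := by rw [hE2]; field_simp
  · -- A2
    rintro Y ⟨X, hX, rfl⟩ Y' ⟨X', hX', rfl⟩ a b
    have hcomb : X ∈ Sp → True := fun _ => trivial
    have h1 := hEstar _ (hC1 _ hX _ hX' a b)
    have h2 := hEstar _ hX
    have h3 := hEstar _ hX'
    have he : (fun s => (a * X s + b * X' s) * ind Sstar s)
        = fun s => a * (X s * ind Sstar s) + b * (X' s * ind Sstar s) := by
      funext s; ring
    rw [he, hA2 _ (hSstarCl _ hX) _ (hSstarCl _ hX') a b] at h1
    rw [show (fun s : ↥Sstar => a * X s.val + b * X' s.val)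
        = fun s : ↥Sstar => (fun t => a * X t + b * X' t) s.val from rfl, h1, h2, h3]
    ring
  · -- A3
    intro hA3
    rintro Y ⟨X, hX, rfl⟩ hE0
    set X' : S → ℝ := fun s => X s * ind Sstar s with hX'def
    have hX' : X' ∈ Sp := hSstarCl _ hX
    have hEX' : E X' = 0 := by
      have := hEstar _ hX
      rw [hE0] at this
      have := this.symm
      field_simp at this
      linarith [this]
    rcases hA3 _ hX' hEX' with h | ⟨s₁, s₂, hs⟩
    · left
      -- {s | X' s = 0} : P = 1; want Pfun Estar {s : Sstar | X s.val = 0} = 1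
      have hXF : {s | X s = 0} ∈ F := by
        have := hC3 _ hX {(0:ℝ)} (by exact Set.ordConnected_singleton)
        simpa using this
      have hset : {s : ↥Sstar | X s.val = 0} = Subtype.val ⁻¹' {s | X s = 0} := rfl
      rw [hset, hPstar _ hXF]
      -- need Pfun E ({X=0} ∩ Sstar) = Pfun E Sstar
      have hdecomp : ind {s | X' s = 0} = fun s =>
          1 * ind ({s | X s = 0} ∩ Sstar) s + 1 * ind Sstarᶜ s := by
        funext s
        by_cases hs : s ∈ Sstar
        · by_cases hx : X s = 0
          · simp [ind, Set.indicator, X', hs, hx]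
          · simp [ind, Set.indicator, X', hs, hx]
        · simp [ind, Set.indicator, X', hs]
      have hcompl : E (ind (Sstarᶜ : Set S)) = 1 - Pfun E Sstar := by
        have he : ind (Sstarᶜ : Set S) = fun s => 1 * (fun _ : S => (1:ℝ)) s + (-1) * ind Sstar s := by
          funext s
          by_cases hs : s ∈ Sstar <;> simp [ind, Set.indicator, hs]
        rw [he, hA2 _ (const_mem' hF hC1 hC2 1) _ (hC2 _ hSstarF) 1 (-1), hA1]
        unfold Pfun; ring
      have h1 : Pfun E {s | X' s = 0} = 1 := h
      unfold Pfun at h1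
      rw [hdecomp, hA2 _ (hC2 _ (inter_mem' hF hXF hSstarF)) _ (hC2 _ (hF.2.1 _ hSstarF)) 1 1,
        hcompl] at h1
      have : E (ind ({s | X s = 0} ∩ Sstar)) = Pfun E Sstar := by unfold Pfun at *; linarith
      unfold Pfun
      rw [this]
      exact div_self hPne
    · right
      have h1 : X' s₁ ≠ 0 := fun h => by simp [h] at hs
      have h2 : X' s₂ ≠ 0 := fun h => by simp [h] at hs
      have hm1 : s₁ ∈ Sstar := by
        by_contra h
        exact h1 (by simp [X', ind, Set.indicator, h])
      have hm2 : s₂ ∈ Sstar := by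
        by_contra h
        exact h2 (by simp [X', ind, Set.indicator, h])
      refine ⟨⟨s₁, hm1⟩, ⟨s₂, hm2⟩, ?_⟩
      have e1 : X s₁ = X' s₁ := by simp [X', ind, Set.indicator, hm1]
      have e2 : X s₂ = X' s₂ := by simp [X', ind, Set.indicator, hm2]
      simpa [e1, e2] using hs
end
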